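/- Let 1 ≤ p, q ≤ ∞ and suppose there is a constant C such that ‖M_{ℍ¹}f‖_{L^q(ℝ³)} ≤ C‖f‖_{L^p(ℝ³)} holds for every f ∈ L^p(ℝ³) (not necessarily Heisenberg radial). Then necessarily 1 + 2/q ≥ 4/p. (The example is f = characteristic function of {(x,x₃) : |x₁−1| < r², |x₂| < r, |x₃| < r}, for which M_{ℍ¹}f ≳ r on {−1 ≤ x₁ ≤ 0, |x₂| < cr, |x₃| < cr} for small c > 0.) -/

import Mathlib

open MeasureTheory Real Set
open scoped ENNReal

noncomputable section

/-- The spherical average on the Heisenberg group ℍ¹ = ℝ²×ℝ: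
`f ∗_ℍ dσ_t(x,x₃) = ∫_{𝕊¹} f(x−ty, x₃−t x·Ay) dσ(y)` where `A` has rows `(0,−1),(1,0)`,
the circle being parametrized by arclength. -/
def heisAvg (f : ℝ × ℝ × ℝ → ℂ) (t : ℝ) (x : ℝ × ℝ × ℝ) : ℂ :=
  ∫ θ in Set.Ioc (0:ℝ) (2 * π),
    f (x.1 - t * Real.cos θ, x.2.1 - t * Real.sin θ,
       x.2.2 - t * (x.1 * (-Real.sin θ) + x.2.1 * Real.cos θ))

/-- The local spherical maximal function `M_{ℍ¹} f = sup_{1<t<2} |f ∗_ℍ dσ_t|`. -/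
def heisMax (f : ℝ × ℝ × ℝ → ℂ) (x : ℝ × ℝ × ℝ) : ℝ :=
  ⨆ t ∈ Set.Ioo (1:ℝ) 2, ‖heisAvg f t x‖

/-- The point on the twisted circle of radius `t` around `x`. -/
private def gmap (t : ℝ) (x : ℝ × ℝ × ℝ) (θ : ℝ) : ℝ × ℝ × ℝ :=
  (x.1 - t * Real.cos θ, x.2.1 - t * Real.sin θ,
    x.2.2 - t * (x.1 * (-Real.sin θ) + x.2.1 * Real.cos θ))

/-- The Knapp-type box. -/
private def boxSet (r : ℝ) : Set (ℝ × ℝ × ℝ) :=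
  Ioo (1 - r^2) (1 + r^2) ×ˢ (Ioo (-r) r ×ˢ Ioo (-r) r)

/-- Its indicator function. -/
private def boxFun (r : ℝ) : ℝ × ℝ × ℝ → ℂ :=
  (boxSet r).indicator (fun _ => (1:ℂ))

private lemma boxSet_meas (r : ℝ) : MeasurableSet (boxSet r) :=
  measurableSet_Ioo.prod (measurableSet_Ioo.prod measurableSet_Ioo)

/-- If `A r^b ≤ D r^a` for all small `r` with `A > 0`, then `a ≤ b`. -/
private lemma aux_exp {a b A D : ℝ} (hA : 0 < A)
    (H : ∀ r : ℝ, 0 < r → r ≤ 1 → A * r ^ b ≤ D * r ^ a) : a ≤ b := by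
  by_contra hcon
  push_neg at hcon
  have he : 0 < a - b := by linarith
  have hAD : A ≤ D := by simpa [Real.one_rpow] using H 1 one_pos le_rfl
  have hD : 0 < D := lt_of_lt_of_le hA hAD
  have hbase : 0 < A / (2 * D) := by positivity
  obtain ⟨r, hr_def⟩ : ∃ r : ℝ, r = min 1 ((A / (2 * D)) ^ ((a - b)⁻¹)) := ⟨_, rfl⟩
  have hrpos : 0 < r := hr_def ▸ lt_min one_pos (Real.rpow_pos_of_pos hbase _)
  have hr1 : r ≤ 1 := hr_def ▸ min_le_left _ _
  have hH := H r hrpos hr1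
  have hsplit : r ^ a = r ^ b * r ^ (a - b) := by
    rw [← Real.rpow_add hrpos]; congr 1; ring
  have hrb : 0 < r ^ b := Real.rpow_pos_of_pos hrpos _
  have h1 : A ≤ D * r ^ (a - b) := by
    have h : A * r ^ b ≤ (D * r ^ (a - b)) * r ^ b := by
      calc A * r ^ b ≤ D * r ^ a := hH
        _ = (D * r ^ (a - b)) * r ^ b := by rw [hsplit]; ring
    exact le_of_mul_le_mul_right h hrb
  have h2 : r ^ (a - b) ≤ A / (2 * D) := by
    have h3 : r ≤ (A / (2 * D)) ^ ((a - b)⁻¹) := hr_def ▸ min_le_right _ _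
    calc r ^ (a - b) ≤ ((A / (2 * D)) ^ ((a - b)⁻¹)) ^ (a - b) :=
          Real.rpow_le_rpow hrpos.le h3 he.le
      _ = A / (2 * D) := by
          rw [← Real.rpow_mul hbase.le, inv_mul_cancel₀ he.ne', Real.rpow_one]
  have hfin : A ≤ A / 2 := by
    calc A ≤ D * r ^ (a - b) := h1
      _ ≤ D * (A / (2 * D)) := mul_le_mul_of_nonneg_left h2 hD.le
      _ = A / 2 := by field_simp
  linarith

/-- The elementary coordinate estimates for the Knapp example. -/
private lemma coord_bounds {r x1 x2 x3 t u : ℝ} (hr0 : 0 < r) (hr1 : r ≤ 1)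
    (h1a : -(1/2) < x1) (h1b : x1 < -(1/4))
    (h2a : -(r/8) < x2) (h2b : x2 < r/8)
    (h3a : -(r/8) < x3) (h3b : x3 < r/8)
    (ht : t = 1 - x1)
    (hu : |u| < r/8) :
    (1 - r^2 < x1 + t * Real.cos u ∧ x1 + t * Real.cos u < 1 + r^2) ∧
    (-r < x2 + t * Real.sin u ∧ x2 + t * Real.sin u < r) ∧
    (-r < x3 - t * (x1 * Real.sin u - x2 * Real.cos u) ∧
      x3 - t * (x1 * Real.sin u - x2 * Real.cos u) < r) := by
  have hs_le : |Real.sin u| ≤ |u| := Real.abs_sin_le_abs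
  have hc_le : Real.cos u ≤ 1 := Real.cos_le_one u
  have hc_ge : 1 - u^2/2 ≤ Real.cos u := Real.one_sub_sq_div_two_le_cos
  have ht0 : (0:ℝ) < t := by rw [ht]; linarith
  have ht2 : t < 2 := by rw [ht]; linarith
  have h2t : (0:ℝ) ≤ 2 - t := by linarith
  have hu0 : (0:ℝ) ≤ |u| := abs_nonneg u
  have hu2 : u^2 < (r/8)^2 := by
    have h := mul_self_lt_mul_self (abs_nonneg u) hu
    rw [abs_mul_abs_self u] at h
    nlinarith [h]
  have hr2 : (0:ℝ) < r^2 := by positivity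
  have hsin_abs : |Real.sin u| < r/8 := lt_of_le_of_lt hs_le hu
  have hsb := abs_lt.1 hsin_abs
  have h2' : |t * Real.sin u| ≤ 2 * (r/8) := by
    rw [abs_mul, abs_of_pos ht0]
    linarith [mul_nonneg h2t (abs_nonneg (Real.sin u))]
  have h3' := abs_le.1 h2'
  have hw : |x1 * Real.sin u - x2 * Real.cos u| ≤ 1/2 * (r/8) + r/8 * 1 := by
    have e1 : |x1 * Real.sin u| ≤ 1/2 * (r/8) := by
      rw [abs_mul]
      exact mul_le_mul (abs_le.2 ⟨by linarith, by linarith⟩) hsin_abs.le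
        (abs_nonneg _) (by norm_num)
    have e2 : |x2 * Real.cos u| ≤ r/8 * 1 := by
      rw [abs_mul]
      exact mul_le_mul (abs_le.2 ⟨by linarith, by linarith⟩) (Real.abs_cos_le_one u)
        (abs_nonneg _) (by linarith)
    calc |x1 * Real.sin u - x2 * Real.cos u|
        ≤ |x1 * Real.sin u| + |x2 * Real.cos u| := abs_sub _ _
      _ ≤ 1/2 * (r/8) + r/8 * 1 := add_le_add e1 e2
  have htw : |t * (x1 * Real.sin u - x2 * Real.cos u)| ≤ 2 * (1/2 * (r/8) + r/8 * 1) := by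
    rw [abs_mul, abs_of_pos ht0]
    linarith [mul_nonneg h2t (abs_nonneg (x1 * Real.sin u - x2 * Real.cos u)),
      abs_nonneg (x1 * Real.sin u - x2 * Real.cos u), hw]
  have htw' := abs_le.1 htw
  refine ⟨⟨?_, ?_⟩, ⟨by linarith [h3'.1], by linarith [h3'.2]⟩,
    by linarith [htw'.2], by linarith [htw'.1]⟩
  · have htu : t * u^2 ≤ 2 * (r/8)^2 := by
      linarith [mul_nonneg h2t (sq_nonneg u), hu2]
    have hA := mul_le_mul_of_nonneg_left hc_ge ht0.le
    linarith [hA, htu, hr2]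
  · have hA := mul_le_mul_of_nonneg_left hc_le ht0.le
    linarith [hA, hr2]

/-- Pointwise lower bound for the maximal function of the box indicator. -/
private lemma heis_lower (r : ℝ) (hr0 : 0 < r) (hr1 : r ≤ 1)
    (x : ℝ × ℝ × ℝ)
    (hx1 : x.1 ∈ Ioo (-(1/2) : ℝ) (-(1/4)))
    (hx2 : x.2.1 ∈ Ioo (-(r/8)) (r/8))
    (hx3 : x.2.2 ∈ Ioo (-(r/8)) (r/8)) :
    r / 4 ≤ heisMax (boxFun r) x := by
  obtain ⟨hx1a, hx1b⟩ := hx1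
  obtain ⟨hx2a, hx2b⟩ := hx2
  obtain ⟨hx3a, hx3b⟩ := hx3
  have hπ : (3:ℝ) < π := Real.pi_gt_three
  have hf_norm : ∀ y, ‖boxFun r y‖ ≤ 1 := by
    intro y
    by_cases h : y ∈ boxSet r <;> simp [boxFun, Set.indicator_apply, h]
  -- uniform bound on the averages
  have hbound : ∀ s : ℝ, ‖heisAvg (boxFun r) s x‖ ≤ 1 * (volume (Ioc (0:ℝ) (2*π))).toReal := by
    intro s
    unfold heisAvg
    refine norm_setIntegral_le_of_norm_le_const ?_ ?_
    · rw [Real.volume_Ioc]; exact ENNReal.ofReal_lt_top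
    · intro θ _; exact hf_norm _
  obtain ⟨t, ht_def⟩ : ∃ t : ℝ, t = 1 - x.1 := ⟨_, rfl⟩
  have ht : t ∈ Ioo (1:ℝ) 2 := by
    rw [Set.mem_Ioo, ht_def]; constructor <;> linarith
  have hgcont : Continuous (gmap t x) := by
    unfold gmap; fun_prop
  have hpre : MeasurableSet (gmap t x ⁻¹' boxSet r) :=
    (boxSet_meas r).preimage hgcont.measurable
  -- the good arc
  have hsub : Ioo (π - r/8) (π + r/8) ⊆ Ioc 0 (2*π) ∩ gmap t x ⁻¹' boxSet r := by
    rintro θ ⟨hθ1, hθ2⟩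
    obtain ⟨u, hu_def⟩ : ∃ u : ℝ, u = θ - π := ⟨_, rfl⟩
    have hu_abs : |u| < r/8 :=
      abs_lt.2 ⟨by rw [hu_def]; linarith, by rw [hu_def]; linarith⟩
    have hcosθ : Real.cos θ = -Real.cos u := by
      rw [hu_def, Real.cos_sub_pi]; ring
    have hsinθ : Real.sin θ = -Real.sin u := by
      rw [hu_def, Real.sin_sub_pi]; ring
    have cb := coord_bounds hr0 hr1 hx1a hx1b hx2a hx2b hx3a hx3b ht_def hu_abs
    refine ⟨⟨by linarith, by linarith⟩, ?_⟩
    show gmap t x θ ∈ boxSet r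
    unfold gmap boxSet
    simp only [Set.mem_prod, Set.mem_Ioo]
    rw [hcosθ, hsinθ]
    exact ⟨⟨by linarith [cb.1.1], by linarith [cb.1.2]⟩,
      ⟨by linarith [cb.2.1.1], by linarith [cb.2.1.2]⟩,
      by linarith [cb.2.2.1], by linarith [cb.2.2.2]⟩
  -- compute the average
  have hAvg : heisAvg (boxFun r) t x
      = ((volume (Ioc (0:ℝ) (2*π) ∩ gmap t x ⁻¹' boxSet r)).toReal : ℝ) • (1:ℂ) := by
    unfold heisAvg
    have hind : ∀ θ : ℝ,
        boxFun r (x.1 - t * Real.cos θ, x.2.1 - t * Real.sin θ,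
          x.2.2 - t * (x.1 * (-Real.sin θ) + x.2.1 * Real.cos θ))
        = (gmap t x ⁻¹' boxSet r).indicator (fun _ => (1:ℂ)) θ := by
      intro θ
      have hg : (x.1 - t * Real.cos θ, x.2.1 - t * Real.sin θ,
          x.2.2 - t * (x.1 * (-Real.sin θ) + x.2.1 * Real.cos θ)) = gmap t x θ := rfl
      rw [hg]
      by_cases h : gmap t x θ ∈ boxSet r <;>
        simp [boxFun, Set.indicator_apply, Set.mem_preimage, h]
    simp_rw [hind]
    rw [setIntegral_indicator hpre, setIntegral_const]; rfl
  have hkey : r/4 ≤ ‖heisAvg (boxFun r) t x‖ := by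
    rw [hAvg, norm_smul, norm_one, mul_one, Real.norm_eq_abs,
      abs_of_nonneg ENNReal.toReal_nonneg]
    have h1 : volume (Ioo (π - r/8) (π + r/8))
        ≤ volume (Ioc (0:ℝ) (2*π) ∩ gmap t x ⁻¹' boxSet r) := measure_mono hsub
    have h2 : volume (Ioc (0:ℝ) (2*π) ∩ gmap t x ⁻¹' boxSet r) ≠ ∞ := by
      refine ne_top_of_le_ne_top ?_ (measure_mono inter_subset_left)
      rw [Real.volume_Ioc]; exact ENNReal.ofReal_ne_top
    have h3 := ENNReal.toReal_mono h2 h1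
    rw [Real.volume_Ioo, ENNReal.toReal_ofReal (by linarith)] at h3
    calc r/4 = (π + r/8) - (π - r/8) := by ring
      _ ≤ _ := h3
  have hM0 : (0:ℝ) ≤ 1 * (volume (Ioc (0:ℝ) (2*π))).toReal := by positivity
  have hb : BddAbove (Set.range fun s : ℝ => ⨆ _ : s ∈ Ioo (1:ℝ) 2, ‖heisAvg (boxFun r) s x‖) := by
    refine ⟨1 * (volume (Ioc (0:ℝ) (2*π))).toReal, ?_⟩
    rintro y ⟨s, rfl⟩
    exact Real.iSup_le (fun _ => hbound s) hM0
  have hstep : ‖heisAvg (boxFun r) t x‖ ≤ heisMax (boxFun r) x := by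
    have he : (⨆ _ : t ∈ Ioo (1:ℝ) 2, ‖heisAvg (boxFun r) t x‖)
        = ‖heisAvg (boxFun r) t x‖ :=
      ciSup_pos (f := fun _ : t ∈ Ioo (1:ℝ) 2 => ‖heisAvg (boxFun r) t x‖) ht
    calc ‖heisAvg (boxFun r) t x‖
        = ⨆ _ : t ∈ Ioo (1:ℝ) 2, ‖heisAvg (boxFun r) t x‖ := he.symm
      _ ≤ heisMax (boxFun r) x := le_ciSup hb t
  exact hkey.trans hstep

/-- Necessity for general (not necessarily Heisenberg radial) functions: if `M_{ℍ¹}`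
is bounded from `L^p(ℝ³)` to `L^q(ℝ³)`, then `1 + 2/q ≥ 4/p`. -/
theorem necessity_heisenberg_maximal_general
    (p q : ℝ≥0∞) (hp : 1 ≤ p) (hq : 1 ≤ q) (C : ℝ)
    (hbdd : ∀ f : ℝ × ℝ × ℝ → ℂ, MemLp f p volume →
      eLpNorm (heisMax f) q volume ≤ ENNReal.ofReal C * eLpNorm f p volume) :
    4/p ≤ 1 + 2/q := by
  by_cases hp_top : p = ∞
  · simp [hp_top, ENNReal.div_top]
  have hp0 : p ≠ 0 := (zero_lt_one.trans_le hp).ne'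
  have hq0 : q ≠ 0 := (zero_lt_one.trans_le hq).ne'
  have master : ∀ r : ℝ, 0 < r → r ≤ 1 →
      (1/4 * (1/64) ^ (1/q.toReal)) * r ^ (1 + 2 * (1/q.toReal)) ≤
      (max C 0 * 8 ^ (1/p.toReal)) * r ^ (4 * (1/p.toReal)) := by
    intro r hr0 hr1
    have hvolB : volume (boxSet r) = ENNReal.ofReal (8 * r^4) := by
      unfold boxSet
      rw [Measure.volume_eq_prod, Measure.prod_prod, Measure.volume_eq_prod, Measure.prod_prod]
      simp only [Real.volume_Ioo]
      rw [← ENNReal.ofReal_mul (by linarith : (0:ℝ) ≤ r - -r),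
        ← ENNReal.ofReal_mul (by nlinarith [sq_nonneg r] : (0:ℝ) ≤ 1 + r^2 - (1 - r^2))]
      congr 1; ring
    obtain ⟨S, hSdef⟩ : ∃ S : Set (ℝ × ℝ × ℝ),
        S = Ioo (-(1/2) : ℝ) (-(1/4)) ×ˢ (Ioo (-(r/8)) (r/8) ×ˢ Ioo (-(r/8)) (r/8)) := ⟨_, rfl⟩
    have hSmeas : MeasurableSet S := by
      rw [hSdef]
      exact measurableSet_Ioo.prod (measurableSet_Ioo.prod measurableSet_Ioo)
    have hvolS : volume S = ENNReal.ofReal (r^2/64) := by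
      rw [hSdef, Measure.volume_eq_prod, Measure.prod_prod, Measure.volume_eq_prod,
        Measure.prod_prod]
      simp only [Real.volume_Ioo]
      rw [← ENNReal.ofReal_mul (by linarith : (0:ℝ) ≤ r/8 - -(r/8)),
        ← ENNReal.ofReal_mul (by linarith : (0:ℝ) ≤ -(1/4) - -(1/2 : ℝ))]
      congr 1; ring
    have hr2pos : (0:ℝ) < r^2/64 := by positivity
    have hvolS_ne0 : volume S ≠ 0 := by
      rw [hvolS]
      simp only [ne_eq, ENNReal.ofReal_eq_zero, not_le]
      exact hr2pos
    have hBne_top : volume (boxSet r) ≠ ∞ := by rw [hvolB]; exact ENNReal.ofReal_ne_top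
    have hmem : MemLp (boxFun r) p volume := by
      unfold boxFun
      exact memLp_indicator_const p (boxSet_meas r) 1 (Or.inr hBne_top)
    have hnormf : eLpNorm (boxFun r) p volume = (volume (boxSet r)) ^ (1/p.toReal) := by
      unfold boxFun
      rw [eLpNorm_indicator_const (boxSet_meas r) hp0 hp_top]
      simp
    have hlow : ∀ x ∈ S, r/4 ≤ heisMax (boxFun r) x := by
      intro x hx
      rw [hSdef] at hx
      simp only [Set.mem_prod] at hx
      exact heis_lower r hr0 hr1 x hx.1 hx.2.1 hx.2.2
    have hmono : eLpNorm (S.indicator (fun _ => r/4)) q volume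
        ≤ eLpNorm (heisMax (boxFun r)) q volume := by
      apply eLpNorm_mono
      intro x
      by_cases hx : x ∈ S
      · have h := hlow x hx
        have h0 : (0:ℝ) ≤ heisMax (boxFun r) x := le_trans (by linarith) h
        rw [Set.indicator_of_mem hx, Real.norm_eq_abs, Real.norm_eq_abs,
          abs_of_nonneg (by linarith : (0:ℝ) ≤ r/4), abs_of_nonneg h0]
        exact h
      · rw [Set.indicator_of_notMem hx]
        simp
    have hind : eLpNorm (S.indicator (fun _ => r/4)) q volume
        = ENNReal.ofReal (r/4) * (volume S) ^ (1/q.toReal) := by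
      rw [eLpNorm_indicator_const' hSmeas hvolS_ne0 hq0]
      congr 1
      rw [← ofReal_norm, Real.norm_eq_abs,
        abs_of_nonneg (by linarith : (0:ℝ) ≤ r/4)]
    have hchain : ENNReal.ofReal (r/4) * (volume S) ^ (1/q.toReal)
        ≤ ENNReal.ofReal C * (volume (boxSet r)) ^ (1/p.toReal) := by
      rw [← hind, ← hnormf]
      exact hmono.trans (hbdd (boxFun r) hmem)
    rw [hvolB, hvolS] at hchain
    have hfin : ENNReal.ofReal C * (ENNReal.ofReal (8 * r^4)) ^ (1/p.toReal) ≠ ∞ :=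
      ENNReal.mul_ne_top ENNReal.ofReal_ne_top
        (ENNReal.rpow_lt_top_of_nonneg (by positivity) ENNReal.ofReal_ne_top).ne
    have hreal := ENNReal.toReal_mono hfin hchain
    simp only [ENNReal.toReal_mul, ← ENNReal.toReal_rpow, ENNReal.toReal_ofReal'] at hreal
    rw [max_eq_left (by linarith : (0:ℝ) ≤ r/4),
      max_eq_left hr2pos.le,
      max_eq_left (by positivity : (0:ℝ) ≤ 8 * r^4)] at hreal
    have hq1 : (r^2/64 : ℝ) ^ (1/q.toReal)
        = (1/64 : ℝ) ^ (1/q.toReal) * r ^ (2 * (1/q.toReal)) := by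
      calc (r^2/64 : ℝ) ^ (1/q.toReal) = ((1/64 : ℝ) * r ^ (2:ℝ)) ^ (1/q.toReal) := by
            congr 1; rw [Real.rpow_two]; ring
        _ = (1/64 : ℝ) ^ (1/q.toReal) * (r ^ (2:ℝ)) ^ (1/q.toReal) :=
            Real.mul_rpow (by norm_num) (Real.rpow_nonneg hr0.le _)
        _ = (1/64 : ℝ) ^ (1/q.toReal) * r ^ (2 * (1/q.toReal)) := by
            rw [← Real.rpow_mul hr0.le]
    have hp1 : (8 * r^4 : ℝ) ^ (1/p.toReal)
        = (8:ℝ) ^ (1/p.toReal) * r ^ (4 * (1/p.toReal)) := by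
      calc (8 * r^4 : ℝ) ^ (1/p.toReal)
          = (8:ℝ) ^ (1/p.toReal) * (r^4 : ℝ) ^ (1/p.toReal) :=
            Real.mul_rpow (by norm_num) (by positivity)
        _ = (8:ℝ) ^ (1/p.toReal) * r ^ (4 * (1/p.toReal)) := by
            rw [← Real.rpow_natCast r 4, ← Real.rpow_mul hr0.le]
            norm_num
    calc (1/4 * (1/64) ^ (1/q.toReal)) * r ^ (1 + 2 * (1/q.toReal))
        = (r/4) * ((r^2/64 : ℝ) ^ (1/q.toReal)) := by
          rw [hq1, Real.rpow_add hr0, Real.rpow_one]; ring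
      _ ≤ max C 0 * ((8 * r^4 : ℝ) ^ (1/p.toReal)) := hreal
      _ = (max C 0 * 8 ^ (1/p.toReal)) * r ^ (4 * (1/p.toReal)) := by rw [hp1]; ring
  have hA : (0:ℝ) < 1/4 * (1/64) ^ (1/q.toReal) := by positivity
  have hle : 4 * (1/p.toReal) ≤ 1 + 2 * (1/q.toReal) := aux_exp hA master
  have h4p : (4:ℝ≥0∞)/p ≠ ∞ := (ENNReal.div_lt_top (by norm_num) hp0).ne
  have h2q : (2:ℝ≥0∞)/q ≠ ∞ := (ENNReal.div_lt_top (by norm_num) hq0).ne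
  have hsum_ne : (1:ℝ≥0∞) + 2/q ≠ ∞ := ENNReal.add_ne_top.2 ⟨ENNReal.one_ne_top, h2q⟩
  rw [← ENNReal.toReal_le_toReal h4p hsum_ne, ENNReal.toReal_div,
    ENNReal.toReal_add ENNReal.one_ne_top h2q, ENNReal.toReal_div]
  simp only [ENNReal.toReal_one, ENNReal.toReal_ofNat]
  rw [mul_one_div, mul_one_div] at hle
  linarith

end
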